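/- Let X be a locally compact separable metric space and T a metric k-current on X. Then T satisfies the alternating property: T(f, g^1,…,g^i,…,g^j,…,g^k) = −T(f, g^1,…,g^j,…,g^i,…,g^k) for any transposition of two of the Lipschitz arguments g^i, g^j. -/

import Mathlib

open MeasureTheory Metric Topology Filter NNReal

/-- A function is locally Lipschitz if it is Lipschitz on every compact set. -/
def LocLip {X : Type*} [MetricSpace X] (g : X → ℝ) : Prop :=
  ∀ K : Set X, IsCompact K → ∃ C : ℝ≥0, LipschitzOnWith C g K

/-- `(f, g¹, …, gᵏ)` is a compactly supported simple metric `k`-form: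
`f` Lipschitz with compact support, each `gⁱ` locally Lipschitz. -/
def IsLipForm {X : Type*} [MetricSpace X] {k : ℕ} (f : X → ℝ) (g : Fin k → X → ℝ) : Prop :=
  (∃ C : ℝ≥0, LipschitzWith C f) ∧ HasCompactSupport f ∧ ∀ i, LocLip (g i)

/-- Convergence of a sequence in `Lip_c(X)`: pointwise convergence with uniformly bounded
Lipschitz constants and uniformly compact supports. -/
def LipConvSeq {X : Type*} [MetricSpace X] (F : ℕ → X → ℝ) (f : X → ℝ) : Prop :=
  (∀ x, Tendsto (fun n => F n x) atTop (𝓝 (f x))) ∧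
  (∃ C : ℝ≥0, LipschitzWith C f ∧ ∀ n, LipschitzWith C (F n)) ∧
  (∃ K : Set X, IsCompact K ∧ tsupport f ⊆ K ∧ ∀ n, tsupport (F n) ⊆ K)

/-- Convergence of a sequence in `Lip_loc(X)`: pointwise convergence with locally uniformly
bounded Lipschitz constants. -/
def LocLipConvSeq {X : Type*} [MetricSpace X] (F : ℕ → X → ℝ) (g : X → ℝ) : Prop :=
  (∀ x, Tendsto (fun n => F n x) atTop (𝓝 (g x))) ∧
  (∀ K : Set X, IsCompact K → ∃ C : ℝ≥0, LipschitzOnWith C g K ∧ ∀ n, LipschitzOnWith C (F n) K)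

/-- A metric `k`-current in the sense of Ambrosio–Kirchheim/Lang: a functional on
compactly supported simple metric `k`-forms that is multilinear, continuous and local. -/
structure MetricCurrent (X : Type*) [MetricSpace X] (k : ℕ) where
  toFun : (X → ℝ) → (Fin k → X → ℝ) → ℝ
  add_left : ∀ f₁ f₂ g, IsLipForm f₁ g → IsLipForm f₂ g →
    toFun (fun x => f₁ x + f₂ x) g = toFun f₁ g + toFun f₂ g
  smul_left : ∀ (c : ℝ) f g, IsLipForm f g →
    toFun (fun x => c * f x) g = c * toFun f g
  add_right : ∀ f g (i : Fin k) (h : X → ℝ), IsLipForm f g → LocLip h →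
    toFun f (Function.update g i (fun x => g i x + h x)) =
      toFun f g + toFun f (Function.update g i h)
  smul_right : ∀ f g (i : Fin k) (c : ℝ), IsLipForm f g →
    toFun f (Function.update g i (fun x => c * g i x)) = c * toFun f g
  locality : ∀ f g, IsLipForm f g →
    (∃ i, ∀ x ∈ tsupport f, ∀ y ∈ tsupport f, g i x = g i y) → toFun f g = 0
  continuity : ∀ (F : ℕ → X → ℝ) (Gs : ℕ → Fin k → X → ℝ) (f : X → ℝ) (g : Fin k → X → ℝ),
    LipConvSeq F f → (∀ i, LocLipConvSeq (fun n => Gs n i) (g i)) →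
    Tendsto (fun n => toFun (F n) (Gs n)) atTop (𝓝 (toFun f g))

/-- `ν` satisfies the defining inequality of the mass of `T`:
`|T(f,g)| ≤ (∏ᵢ Lip(gⁱ)) ∫ |f| dν` on compactly supported simple metric forms. -/
def MassBound {X : Type*} [MetricSpace X] [MeasurableSpace X] {k : ℕ}
    (T : (X → ℝ) → (Fin k → X → ℝ) → ℝ) (ν : Measure X) : Prop :=
  ∀ (f : X → ℝ) (g : Fin k → X → ℝ) (C : Fin k → ℝ≥0),
    IsLipForm f g → (∀ i, LipschitzWith (C i) (g i)) →
    |T f g| ≤ (∏ i, (C i : ℝ)) * ∫ x, |f x| ∂ν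

namespace Stmt17Aux

noncomputable section

variable {X : Type*} [MetricSpace X]

lemma locLip_const (c : ℝ) : LocLip (fun _ : X => c) := fun K _ =>
  ⟨0, lipschitzOnWith_iff_dist_le_mul.2 (by intro x _ y _; simp)⟩

lemma locLip_add {g1 g2 : X → ℝ} (h1 : LocLip g1) (h2 : LocLip g2) :
    LocLip (fun x => g1 x + g2 x) := by
  intro K hK
  obtain ⟨C1, hC1⟩ := h1 K hK
  obtain ⟨C2, hC2⟩ := h2 K hK
  refine ⟨C1 + C2, lipschitzOnWith_iff_dist_le_mul.2 fun x hx y hy => ?_⟩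
  have e1 := lipschitzOnWith_iff_dist_le_mul.1 hC1 x hx y hy
  have e2 := lipschitzOnWith_iff_dist_le_mul.1 hC2 x hx y hy
  have e3 : dist (g1 x + g2 x) (g1 y + g2 y) ≤ dist (g1 x) (g1 y) + dist (g2 x) (g2 y) :=
    dist_add_add_le _ _ _ _
  push_cast
  nlinarith [dist_nonneg (x := x) (y := y)]

lemma locLip_sub {g1 g2 : X → ℝ} (h1 : LocLip g1) (h2 : LocLip g2) :
    LocLip (fun x => g1 x - g2 x) := by
  intro K hK
  obtain ⟨C1, hC1⟩ := h1 K hK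
  obtain ⟨C2, hC2⟩ := h2 K hK
  refine ⟨C1 + C2, lipschitzOnWith_iff_dist_le_mul.2 fun x hx y hy => ?_⟩
  have e1 := lipschitzOnWith_iff_dist_le_mul.1 hC1 x hx y hy
  have e2 := lipschitzOnWith_iff_dist_le_mul.1 hC2 x hx y hy
  have e3 : dist (g1 x - g2 x) (g1 y - g2 y) ≤ dist (g1 x) (g1 y) + dist (g2 x) (g2 y) :=
    dist_sub_sub_le _ _ _ _
  push_cast
  nlinarith [dist_nonneg (x := x) (y := y)]

lemma locLip_comp {u : X → ℝ} (hu : LocLip u) {β : ℝ → ℝ} {C : ℝ≥0}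
    (hβ : LipschitzWith C β) : LocLip (fun x => β (u x)) := by
  intro K hK
  obtain ⟨C', hC'⟩ := hu K hK
  exact ⟨C * C', hβ.comp_lipschitzOnWith hC'⟩

lemma locLip_continuous [LocallyCompactSpace X] {u : X → ℝ} (hu : LocLip u) :
    Continuous u := by
  rw [continuous_iff_continuousAt]
  intro x
  obtain ⟨K, hK, hKx⟩ := exists_compact_mem_nhds x
  obtain ⟨C, hC⟩ := hu K hK
  exact hC.continuousOn.continuousAt hKx

lemma locLip_sum (s : Finset ℕ) (V : ℕ → X → ℝ) (hV : ∀ m, LocLip (V m)) :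
    LocLip (fun x => ∑ m ∈ s, V m x) := by
  classical
  induction s using Finset.induction_on with
  | empty => simpa using locLip_const (0 : ℝ)
  | insert a s ha ih =>
      have : (fun x => ∑ m ∈ insert a s, V m x) = fun x => V a x + ∑ m ∈ s, V m x := by
        funext x; rw [Finset.sum_insert ha]
      rw [this]
      exact locLip_add (hV a) ih



def clampR (a b t : ℝ) : ℝ := min (max t a) b

lemma clampR_of_le {a b t : ℝ} (hab : a ≤ b) (h : t ≤ a) : clampR a b t = a := by
  unfold clampR; rw [max_eq_right h, min_eq_left hab]
lemma clampR_of_ge {a b t : ℝ} (hab : a ≤ b) (h : b ≤ t) : clampR a b t = b := by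
  unfold clampR; rw [max_eq_left (hab.trans h), min_eq_right h]
lemma clampR_of_mem {a b t : ℝ} (h1 : a ≤ t) (h2 : t ≤ b) : clampR a b t = t := by
  unfold clampR; rw [max_eq_left h1, min_eq_left h2]
lemma clampR_lower {a b t : ℝ} (hab : a ≤ b) : a ≤ clampR a b t :=
  le_min (le_max_right _ _) hab
lemma clampR_upper {a b t : ℝ} : clampR a b t ≤ b := min_le_right _ _
lemma clampR_mono {a b : ℝ} : Monotone (clampR a b) := fun s t h =>
  min_le_min (max_le_max h le_rfl) le_rfl
lemma clampR_incr_le {a b s t : ℝ} (h : s ≤ t) :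
    clampR a b t - clampR a b s ≤ t - s := by
  simp only [clampR, min_def, max_def]; split_ifs <;> linarith
lemma clampR_glue {a b c : ℝ} (hab : a ≤ b) (hbc : b ≤ c) (t : ℝ) :
    clampR a b t + clampR b c t = clampR a c t + b := by
  simp only [clampR, min_def, max_def]; split_ifs <;> linarith
lemma clampR_shift0 {a b : ℝ} (t : ℝ) :
    clampR 0 (b - a) (t - a) = clampR a b t - a := by
  simp only [clampR, min_def, max_def]; split_ifs <;> linarith
lemma clampR_zero_split {L d : ℝ} (hL : 0 ≤ L) (hd : 0 ≤ d) (s : ℝ) :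
    clampR 0 (L + d) s = clampR 0 L s + clampR 0 d (s - L) := by
  simp only [clampR, min_def, max_def]; split_ifs <;> linarith

lemma abs_clampR_sub (a b s t : ℝ) :
    |clampR a b s - clampR a b t| ≤ |s - t| := by
  rcases le_total t s with h | h
  · rw [abs_of_nonneg (by simpa using sub_nonneg.2 (clampR_mono (a := a) (b := b) h)),
      abs_of_nonneg (by linarith)]
    exact clampR_incr_le h
  · rw [abs_of_nonpos (by simpa using sub_nonpos.2 (clampR_mono (a := a) (b := b) h)),
      abs_of_nonpos (by linarith)]
    have := clampR_incr_le (a := a) (b := b) h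
    linarith

lemma lipschitzWith_clampR (a b : ℝ) : LipschitzWith 1 (clampR a b) := by
  apply LipschitzWith.of_dist_le_mul
  intro s t
  rw [Real.dist_eq, Real.dist_eq, NNReal.coe_one, one_mul]
  exact abs_clampR_sub a b s t

/-! ### the grid -/

def gE (M n : ℕ) (m : ℕ) : ℝ := -(M : ℝ) + m / (n + 1)

def gridσ (M n : ℕ) (t : ℝ) : ℝ :=
  ∑ m ∈ Finset.range (M * (n + 1)), clampR 0 (1 / (n + 1)) (t - gE M n (2 * m))

def gridτ (M n : ℕ) (t : ℝ) : ℝ :=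
  ∑ m ∈ Finset.range (M * (n + 1)), clampR 0 (1 / (n + 1)) (t - gE M n (2 * m + 1))

lemma npos (n : ℕ) : (0 : ℝ) < 1 / (n + 1) := by positivity

lemma gE_succ (M n m : ℕ) : gE M n (m + 1) = gE M n m + 1 / (n + 1) := by
  unfold gE; push_cast; ring

lemma gE_mono (M n : ℕ) {m m' : ℕ} (h : m ≤ m') : gE M n m ≤ gE M n m' := by
  unfold gE
  have : (m : ℝ) ≤ m' := by exact_mod_cast h
  have hp : (0:ℝ) < (n:ℝ) + 1 := by positivity
  gcongr

lemma gE_zero (M n : ℕ) : gE M n 0 = -(M : ℝ) := by simp [gE]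

lemma gE_top (M n : ℕ) : gE M n (2 * (M * (n + 1))) = (M : ℝ) := by
  unfold gE
  have hp : ((n:ℝ) + 1) ≠ 0 := by positivity
  push_cast
  field_simp
  ring

lemma sum_range_two_mul (N : ℕ) (F : ℕ → ℝ) :
    ∑ m ∈ Finset.range (2 * N), F m = ∑ m ∈ Finset.range N, (F (2 * m) + F (2 * m + 1)) := by
  induction N with
  | zero => simp
  | succ N ih =>
      have h2 : 2 * (N + 1) = (2 * N + 1) + 1 := by ring
      rw [h2, Finset.sum_range_succ, Finset.sum_range_succ, ih, Finset.sum_range_succ]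
      ring

lemma clampR_chain (a : ℕ → ℝ) (ha : ∀ m, a m ≤ a (m + 1)) (t s : ℝ) (N : ℕ) :
    (∑ m ∈ Finset.range N, (clampR (a m) (a (m + 1)) t - clampR (a m) (a (m + 1)) s))
      = clampR (a 0) (a N) t - clampR (a 0) (a N) s := by
  have hmono : Monotone a := monotone_nat_of_le_succ ha
  induction N with
  | zero =>
      have hc : ∀ x : ℝ, clampR (a 0) (a 0) x = a 0 := fun x => by
        rcases le_total x (a 0) with h | h
        · exact clampR_of_le le_rfl h
        · exact clampR_of_ge le_rfl h
      simp [hc]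
  | succ N ih =>
      rw [Finset.sum_range_succ, ih]
      have h0N : a 0 ≤ a N := hmono (Nat.zero_le N)
      have g1 := clampR_glue h0N (ha N) t
      have g2 := clampR_glue h0N (ha N) s
      linarith

/-- The key estimate: a sum of small clamps with spacing `2h` approximates half the big clamp. -/
lemma est (h : ℝ) (hpos : 0 < h) (a t : ℝ) (N : ℕ) :
    |(∑ m ∈ Finset.range N, clampR 0 h (t - (a + 2 * m * h))) -
        clampR 0 (2 * N * h) (t - a) / 2| ≤ h / 2 ∧
      (a + 2 * N * h ≤ t →
        (∑ m ∈ Finset.range N, clampR 0 h (t - (a + 2 * m * h))) =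
          clampR 0 (2 * N * h) (t - a) / 2) := by
  induction N with
  | zero =>
      constructor
      · simp only [Finset.sum_range_zero]
        have : clampR 0 (2 * (0:ℕ) * h) (t - a) = 0 := by
          push_cast
          rw [show (2:ℝ) * 0 * h = 0 by ring]
          rcases le_total (t - a) 0 with h' | h'
          · exact clampR_of_le le_rfl h'
          · exact clampR_of_ge le_rfl h'
        rw [this]; simp [le_of_lt hpos]; linarith
      · intro _
        simp only [Finset.sum_range_zero]
        have : clampR 0 (2 * (0:ℕ) * h) (t - a) = 0 := by
          push_cast
          rw [show (2:ℝ) * 0 * h = 0 by ring]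
          rcases le_total (t - a) 0 with h' | h'
          · exact clampR_of_le le_rfl h'
          · exact clampR_of_ge le_rfl h'
        rw [this]; ring
  | succ N ih =>
      have hL : (0:ℝ) ≤ 2 * N * h := by positivity
      have hd : (0:ℝ) ≤ 2 * h := by positivity
      have hCsplit : clampR 0 (2 * (N + 1 : ℕ) * h) (t - a)
          = clampR 0 (2 * N * h) (t - a) + clampR 0 (2 * h) (t - a - 2 * N * h) := by
        push_cast
        rw [show (2:ℝ) * ((N:ℝ) + 1) * h = 2 * N * h + 2 * h by ring]
        exact clampR_zero_split hL hd _
      have hSsplit : (∑ m ∈ Finset.range (N + 1), clampR 0 h (t - (a + 2 * m * h)))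
          = (∑ m ∈ Finset.range N, clampR 0 h (t - (a + 2 * m * h)))
            + clampR 0 h (t - a - 2 * N * h) := by
        rw [Finset.sum_range_succ]
        congr 1
        ring_nf
      set r : ℝ := t - a - 2 * N * h with hr
      rcases le_or_gt r 0 with hr0 | hr0
      · have c1 : clampR 0 h (t - a - 2 * N * h) = 0 := clampR_of_le hpos.le hr0
        have c2 : clampR 0 (2 * h) (t - a - 2 * N * h) = 0 := clampR_of_le hd hr0
        constructor
        · rw [hSsplit, hCsplit, c1, c2]
          have := ih.1
          convert this using 2
          ring
        · intro hge
          exfalso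
          push_cast at hge
          nlinarith
      · have hNle : a + 2 * N * h ≤ t := by nlinarith
        have hE0 := ih.2 hNle
        have key : ∀ P : ℝ → Prop,
            (∀ c1 c2 : ℝ, c1 = clampR 0 h r → c2 = clampR 0 (2*h) r → P (c1 - c2 / 2)) → True := fun _ _ => trivial
        have c1b : clampR 0 h r = if r ≤ h then r else h := by
          split_ifs with hcase
          · exact clampR_of_mem hr0.le hcase
          · exact clampR_of_ge hpos.le (le_of_not_ge hcase)
        have c2b : clampR 0 (2*h) r = if r ≤ 2*h then r else 2*h := by
          split_ifs with hcase
          · exact clampR_of_mem hr0.le hcase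
          · exact clampR_of_ge hd (le_of_not_ge hcase)
        constructor
        · rw [hSsplit, hCsplit, hE0]
          have : ∀ A B : ℝ, |(A + clampR 0 h r) - (A + B + clampR 0 (2*h) r) / 2| ≤ h/2 → True := fun _ _ _ => trivial
          rw [c1b, c2b]
          split_ifs with h1 h2 h2 <;>
            [skip; (exfalso; linarith); skip; skip] <;>
            (rw [abs_le]; constructor <;> nlinarith [hE0])
        · intro hge
          have hrge : 2 * h ≤ r := by push_cast at hge; nlinarith
          rw [hSsplit, hCsplit, hE0, c1b, c2b]
          split_ifs with h1 h2
          · linarith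
          · linarith
          · linarith
          · ring

lemma grid_sum_eq (M n : ℕ) (t : ℝ) :
    gridσ M n t + gridτ M n t = clampR (-(M:ℝ)) M t + M := by
  have hstep : ∀ m : ℕ, gE M n m ≤ gE M n (m + 1) := by
    intro m; rw [gE_succ]; linarith [npos n]
  have hrw : ∀ m' : ℕ, clampR 0 (1 / ((n:ℝ) + 1)) (t - gE M n m')
      = clampR (gE M n m') (gE M n (m' + 1)) t - clampR (gE M n m') (gE M n (m' + 1)) (-(M:ℝ)) := by
    intro m'
    have h1 : clampR (gE M n m') (gE M n (m' + 1)) (-(M:ℝ)) = gE M n m' := by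
      apply clampR_of_le (hstep m')
      unfold gE
      have : (0:ℝ) ≤ (m' : ℝ) / ((n:ℝ) + 1) := by positivity
      linarith
    rw [h1]
    rw [show (1 : ℝ) / ((n:ℝ) + 1) = gE M n (m' + 1) - gE M n m' by rw [gE_succ]; ring]
    exact clampR_shift0 t
  have hmerge : gridσ M n t + gridτ M n t
      = ∑ m' ∈ Finset.range (2 * (M * (n + 1))), clampR 0 (1 / ((n:ℝ) + 1)) (t - gE M n m') := by
    rw [sum_range_two_mul, gridσ, gridτ, ← Finset.sum_add_distrib]
  rw [hmerge]
  calc (∑ m' ∈ Finset.range (2 * (M * (n + 1))), clampR 0 (1 / ((n:ℝ) + 1)) (t - gE M n m'))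
      = ∑ m' ∈ Finset.range (2 * (M * (n + 1))),
          (clampR (gE M n m') (gE M n (m' + 1)) t - clampR (gE M n m') (gE M n (m' + 1)) (-(M:ℝ))) := by
        exact Finset.sum_congr rfl fun m' _ => hrw m'
    _ = clampR (gE M n 0) (gE M n (2 * (M * (n + 1)))) t
          - clampR (gE M n 0) (gE M n (2 * (M * (n + 1)))) (-(M:ℝ)) := clampR_chain _ hstep _ _ _
    _ = clampR (-(M:ℝ)) M t + M := by
        rw [gE_zero, gE_top]
        have hMM : -(M:ℝ) ≤ (M:ℝ) := by
          have : (0:ℝ) ≤ M := Nat.cast_nonneg M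
          linarith
        rw [clampR_of_mem le_rfl hMM]
        ring

lemma gridσ_mono (M n : ℕ) : Monotone (gridσ M n) := by
  intro s t h
  apply Finset.sum_le_sum
  intro m _
  exact clampR_mono (by linarith)

lemma gridτ_mono (M n : ℕ) : Monotone (gridτ M n) := by
  intro s t h
  apply Finset.sum_le_sum
  intro m _
  exact clampR_mono (by linarith)

lemma gridσ_incr_le (M n : ℕ) {s t : ℝ} (h : s ≤ t) :
    gridσ M n t - gridσ M n s ≤ t - s := by
  have h1 := grid_sum_eq M n t
  have h2 := grid_sum_eq M n s
  have h3 : gridτ M n s ≤ gridτ M n t := gridτ_mono M n h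
  have h4 := clampR_incr_le (a := -(M:ℝ)) (b := (M:ℝ)) h
  linarith

lemma gridτ_incr_le (M n : ℕ) {s t : ℝ} (h : s ≤ t) :
    gridτ M n t - gridτ M n s ≤ t - s := by
  have h1 := grid_sum_eq M n t
  have h2 := grid_sum_eq M n s
  have h3 : gridσ M n s ≤ gridσ M n t := gridσ_mono M n h
  have h4 := clampR_incr_le (a := -(M:ℝ)) (b := (M:ℝ)) h
  linarith

lemma lipschitzWith_gridσ (M n : ℕ) : LipschitzWith 1 (gridσ M n) := by
  apply LipschitzWith.of_dist_le_mul
  intro s t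
  rw [Real.dist_eq, Real.dist_eq, NNReal.coe_one, one_mul]
  rcases le_total s t with h | h
  · rw [abs_of_nonpos (by linarith [gridσ_mono M n h]), abs_of_nonpos (by linarith)]
    have := gridσ_incr_le M n h; linarith
  · rw [abs_of_nonneg (by linarith [gridσ_mono M n h]), abs_of_nonneg (by linarith)]
    have := gridσ_incr_le M n h; linarith

lemma lipschitzWith_gridτ (M n : ℕ) : LipschitzWith 1 (gridτ M n) := by
  apply LipschitzWith.of_dist_le_mul
  intro s t
  rw [Real.dist_eq, Real.dist_eq, NNReal.coe_one, one_mul]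
  rcases le_total s t with h | h
  · rw [abs_of_nonpos (by linarith [gridτ_mono M n h]), abs_of_nonpos (by linarith)]
    have := gridτ_incr_le M n h; linarith
  · rw [abs_of_nonneg (by linarith [gridτ_mono M n h]), abs_of_nonneg (by linarith)]
    have := gridτ_incr_le M n h; linarith

lemma one_div_np (n : ℕ) : (0:ℝ) < (n:ℝ) + 1 := by positivity

lemma half_le (n : ℕ) : (1/((n:ℝ)+1))/2 ≤ 2/((n:ℝ)+1) := by
  have hp := one_div_np n
  rw [div_div, div_le_div_iff₀ (by positivity) hp]
  linarith

lemma gridσ_est (M n : ℕ) (t : ℝ) (h1 : -(M:ℝ) ≤ t) (h2 : t ≤ M) :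
    |gridσ M n t - (t + M) / 2| ≤ 2 / ((n:ℝ) + 1) := by
  have hp := one_div_np n
  have hpos : (0:ℝ) < 1/((n:ℝ)+1) := npos n
  have hest := (est (1/((n:ℝ)+1)) hpos (-(M:ℝ)) t (M * (n + 1))).1
  have hsum : gridσ M n t
      = ∑ m ∈ Finset.range (M * (n + 1)), clampR 0 (1/((n:ℝ)+1)) (t - (-(M:ℝ) + 2 * m * (1/((n:ℝ)+1)))) := by
    unfold gridσ
    refine Finset.sum_congr rfl fun m _ => ?_
    congr 1
    unfold gE
    push_cast
    ring
  have htop : 2 * ((M * (n + 1) : ℕ) : ℝ) * (1/((n:ℝ)+1)) = 2 * M := by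
    push_cast
    field_simp
  have hclamp : clampR 0 (2 * ((M * (n + 1) : ℕ) : ℝ) * (1/((n:ℝ)+1))) (t - (-(M:ℝ))) = t + M := by
    rw [htop, show t - (-(M:ℝ)) = t + M by ring]
    exact clampR_of_mem (by linarith) (by linarith)
  rw [hsum]
  rw [hclamp] at hest
  calc |(∑ m ∈ Finset.range (M * (n + 1)), clampR 0 (1/((n:ℝ)+1)) (t - (-(M:ℝ) + 2 * m * (1/((n:ℝ)+1))))) - (t + M) / 2|
      ≤ (1/((n:ℝ)+1)) / 2 := hest
    _ ≤ 2 / ((n:ℝ) + 1) := half_le n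

lemma gridτ_est (M n : ℕ) (t : ℝ) (h1 : -(M:ℝ) ≤ t) (h2 : t ≤ M) :
    |gridτ M n t - (t + M) / 2| ≤ 2 / ((n:ℝ) + 1) := by
  have hp := one_div_np n
  have hpos : (0:ℝ) < 1/((n:ℝ)+1) := npos n
  have hest := (est (1/((n:ℝ)+1)) hpos (-(M:ℝ) + 1/((n:ℝ)+1)) t (M * (n + 1))).1
  have hsum : gridτ M n t
      = ∑ m ∈ Finset.range (M * (n + 1)), clampR 0 (1/((n:ℝ)+1)) (t - ((-(M:ℝ) + 1/((n:ℝ)+1)) + 2 * m * (1/((n:ℝ)+1)))) := by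
    unfold gridτ
    refine Finset.sum_congr rfl fun m _ => ?_
    congr 1
    unfold gE
    push_cast
    ring
  have htop : 2 * ((M * (n + 1) : ℕ) : ℝ) * (1/((n:ℝ)+1)) = 2 * M := by
    push_cast
    field_simp
  have hclamp : |clampR 0 (2 * ((M * (n + 1) : ℕ) : ℝ) * (1/((n:ℝ)+1))) (t - (-(M:ℝ) + 1/((n:ℝ)+1))) - (t + M)| ≤ 1/((n:ℝ)+1) := by
    rw [htop]
    rcases le_total (t - (-(M:ℝ) + 1/((n:ℝ)+1))) 0 with hc | hc
    · rw [clampR_of_le (by positivity) hc, abs_of_nonpos (by linarith)]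
      linarith
    · rw [clampR_of_mem hc (by linarith)]
      rw [show t - (-(M:ℝ) + 1/((n:ℝ)+1)) - (t + M) = -(1/((n:ℝ)+1)) by ring, abs_neg, abs_of_pos hpos]
  have habs2 : |clampR 0 (2 * ((M * (n + 1) : ℕ) : ℝ) * (1/((n:ℝ)+1))) (t - (-(M:ℝ) + 1/((n:ℝ)+1))) / 2 - (t + M) / 2| ≤ (1/((n:ℝ)+1)) / 2 := by
    rw [show clampR 0 (2 * ((M * (n + 1) : ℕ) : ℝ) * (1/((n:ℝ)+1))) (t - (-(M:ℝ) + 1/((n:ℝ)+1))) / 2 - (t + M) / 2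
        = (clampR 0 (2 * ((M * (n + 1) : ℕ) : ℝ) * (1/((n:ℝ)+1))) (t - (-(M:ℝ) + 1/((n:ℝ)+1))) - (t + M)) / 2 by ring]
    rw [abs_div, abs_of_pos (by norm_num : (0:ℝ) < 2)]
    linarith
  rw [hsum]
  have htri := abs_sub_le
    (∑ m ∈ Finset.range (M * (n + 1)), clampR 0 (1/((n:ℝ)+1)) (t - ((-(M:ℝ) + 1/((n:ℝ)+1)) + 2 * m * (1/((n:ℝ)+1)))))
    (clampR 0 (2 * ((M * (n + 1) : ℕ) : ℝ) * (1/((n:ℝ)+1))) (t - (-(M:ℝ) + 1/((n:ℝ)+1))) / 2)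
    ((t + M) / 2)
  have hfin : (1/((n:ℝ)+1)) / 2 + (1/((n:ℝ)+1)) / 2 ≤ 2 / ((n:ℝ)+1) := by
    have : (1:ℝ)/((n:ℝ)+1) ≤ 2/((n:ℝ)+1) := by gcongr <;> norm_num
    linarith
  linarith

/-! ### basic manipulation of currents -/

variable {k : ℕ}

lemma isLipForm_update {f : X → ℝ} {g : Fin k → X → ℝ} (hfg : IsLipForm f g)
    (l : Fin k) {h : X → ℝ} (hh : LocLip h) : IsLipForm f (Function.update g l h) := by
  refine ⟨hfg.1, hfg.2.1, fun m => ?_⟩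
  rcases eq_or_ne m l with rfl | hne
  · simpa using hh
  · simpa [Function.update_of_ne hne] using hfg.2.2 m

lemma const_slot (T : MetricCurrent X k) (f : X → ℝ) (gb : Fin k → X → ℝ)
    (hf : IsLipForm f gb) (l : Fin k)
    (hc : ∀ x ∈ tsupport f, ∀ y ∈ tsupport f, gb l x = gb l y) : T.toFun f gb = 0 :=
  T.locality f gb hf ⟨l, hc⟩

lemma add_slot (T : MetricCurrent X k) (f : X → ℝ) (gb : Fin k → X → ℝ) (l : Fin k)
    (h₁ h₂ : X → ℝ) (hf : IsLipForm f gb) (hh₁ : LocLip h₁) (hh₂ : LocLip h₂) :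
    T.toFun f (Function.update gb l (fun x => h₁ x + h₂ x)) =
      T.toFun f (Function.update gb l h₁) + T.toFun f (Function.update gb l h₂) := by
  have hb : IsLipForm f (Function.update gb l h₁) := isLipForm_update hf l hh₁
  have key := T.add_right f (Function.update gb l h₁) l h₂ hb hh₂
  simp only [Function.update_self, Function.update_idem] at key
  exact key

lemma smul_slot (T : MetricCurrent X k) (f : X → ℝ) (gb : Fin k → X → ℝ) (l : Fin k)
    (c : ℝ) (h : X → ℝ) (hf : IsLipForm f gb) (hh : LocLip h) :
    T.toFun f (Function.update gb l (fun x => c * h x)) =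
      c * T.toFun f (Function.update gb l h) := by
  have key := T.smul_right f (Function.update gb l h) l c (isLipForm_update hf l hh)
  simp only [Function.update_self, Function.update_idem] at key
  exact key

lemma transl_slot (T : MetricCurrent X k) (f : X → ℝ) (gb : Fin k → X → ℝ) (l : Fin k)
    (h : X → ℝ) (c : ℝ) (hf : IsLipForm f gb) (hh : LocLip h) :
    T.toFun f (Function.update gb l (fun x => h x + c)) =
      T.toFun f (Function.update gb l h) := by
  rw [add_slot T f gb l h (fun _ => c) hf hh (locLip_const c)]
  have hz : T.toFun f (Function.update gb l fun _ => c) = 0 :=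
    const_slot T f _ (isLipForm_update hf l (locLip_const c)) l
      (by intro x _ y _; simp)
  rw [hz, add_zero]

lemma replace_slot (T : MetricCurrent X k) (f : X → ℝ) (gb : Fin k → X → ℝ) (l : Fin k)
    (h₁ h₂ : X → ℝ) (hf : IsLipForm f gb) (hh₁ : LocLip h₁) (hh₂ : LocLip h₂)
    (heq : ∀ x ∈ tsupport f, h₁ x = h₂ x) :
    T.toFun f (Function.update gb l h₁) = T.toFun f (Function.update gb l h₂) := by
  have key := add_slot T f gb l h₂ (fun x => h₁ x - h₂ x) hf hh₂ (locLip_sub hh₁ hh₂)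
  have e : (fun x => h₂ x + (h₁ x - h₂ x)) = h₁ := by funext x; ring
  rw [e] at key
  have hz : T.toFun f (Function.update gb l (fun x => h₁ x - h₂ x)) = 0 := by
    refine const_slot T f _ (isLipForm_update hf l (locLip_sub hh₁ hh₂)) l ?_
    intro x hx y hy
    simp [heq x hx, heq y hy]
  rw [key, hz, add_zero]

lemma sum_slot (T : MetricCurrent X k) (f : X → ℝ) (gb : Fin k → X → ℝ) (l : Fin k)
    (s : Finset ℕ) (V : ℕ → X → ℝ) (hf : IsLipForm f gb) (hV : ∀ m, LocLip (V m)) :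
    T.toFun f (Function.update gb l (fun x => ∑ m ∈ s, V m x)) =
      ∑ m ∈ s, T.toFun f (Function.update gb l (V m)) := by
  classical
  induction s using Finset.induction_on with
  | empty =>
      simp only [Finset.sum_empty]
      exact const_slot T f _ (isLipForm_update hf l (by simpa using locLip_const (0:ℝ))) l
        (by intro x _ y _; simp)
  | insert a s ha ih =>
      have e : (fun x => ∑ m ∈ insert a s, V m x) = fun x => V a x + ∑ m ∈ s, V m x := by
        funext x; rw [Finset.sum_insert ha]
      rw [e, add_slot T f gb l (V a) (fun x => ∑ m ∈ s, V m x) hf (hV a) (locLip_sum s V hV),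
        ih, Finset.sum_insert ha]

/-! ### the two-slot insertion -/

def Gm (g : Fin k → X → ℝ) (i j : Fin k) (v w : X → ℝ) : Fin k → X → ℝ :=
  Function.update (Function.update g j w) i v

lemma Gm_eq (g : Fin k → X → ℝ) {i j : Fin k} (hij : i ≠ j) (v w : X → ℝ) :
    Gm g i j v w = Function.update (Function.update g i v) j w := by
  unfold Gm; exact (Function.update_comm hij v w g).symm

lemma Gm_apply_i (g : Fin k → X → ℝ) (i j : Fin k) (v w : X → ℝ) :
    Gm g i j v w i = v := by unfold Gm; simp

lemma Gm_apply_j (g : Fin k → X → ℝ) {i j : Fin k} (hij : i ≠ j) (v w : X → ℝ) :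
    Gm g i j v w j = w := by
  unfold Gm
  rw [Function.update_of_ne hij.symm, Function.update_self]

lemma Gm_apply_ne (g : Fin k → X → ℝ) {i j : Fin k} {l : Fin k}
    (hl₁ : l ≠ i) (hl₂ : l ≠ j) (v w : X → ℝ) : Gm g i j v w l = g l := by
  unfold Gm
  rw [Function.update_of_ne hl₁, Function.update_of_ne hl₂]

lemma isLipForm_Gm {f : X → ℝ} {g : Fin k → X → ℝ} (hfg : IsLipForm f g)
    (i j : Fin k) {v w : X → ℝ} (hv : LocLip v) (hw : LocLip w) :
    IsLipForm f (Gm g i j v w) :=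
  isLipForm_update (isLipForm_update hfg j hw) i hv

/-! ### multiplying `f` by a cutoff -/

lemma isLipForm_mul {f : X → ℝ} {g : Fin k → X → ℝ} (hfg : IsLipForm f g)
    (θ : X → ℝ) (hθ : LocLip θ) (h0 : ∀ x, 0 ≤ θ x) (h1 : ∀ x, θ x ≤ 1) :
    IsLipForm (fun x => f x * θ x) g := by
  obtain ⟨Cf, hCf⟩ := hfg.1
  have hK : IsCompact (tsupport f) := hfg.2.1
  have hsupp : HasCompactSupport fun x => f x * θ x := hfg.2.1.mul_right
  obtain ⟨B0, hB0⟩ := ((hK.image_of_continuousOn hCf.continuous.continuousOn)).isBounded.exists_norm_le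
  set B : ℝ := max B0 0 with hBdef
  have hB : ∀ x, |f x| ≤ B := by
    intro x
    by_cases hx : x ∈ tsupport f
    · exact le_trans (by simpa [Real.norm_eq_abs] using hB0 (f x) ⟨x, hx, rfl⟩) (le_max_left _ _)
    · simp [image_eq_zero_of_notMem_tsupport hx, hBdef]
  have hBnn : 0 ≤ B := le_max_right _ _
  obtain ⟨Cθ, hCθ⟩ := hθ (tsupport f) hK
  refine ⟨⟨Real.toNNReal ((Cf : ℝ) + B * Cθ), ?_⟩, hsupp, hfg.2.2⟩
  apply LipschitzWith.of_dist_le_mul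
  intro x y
  have hcoe : (Real.toNNReal ((Cf:ℝ) + B * Cθ) : ℝ) = (Cf:ℝ) + B * Cθ :=
    Real.coe_toNNReal _ (by positivity)
  rw [Real.dist_eq, hcoe]
  have hd : 0 ≤ dist x y := dist_nonneg
  have hflip : ∀ z w : X, z ∈ tsupport f → w ∉ tsupport f →
      |f z * θ z - f w * θ w| ≤ ((Cf:ℝ) + B * Cθ) * dist z w := by
    intro z w hz hw
    have hfw : f w = 0 := image_eq_zero_of_notMem_tsupport hw
    have hlip : |f z - f w| ≤ (Cf:ℝ) * dist z w := by
      have := hCf.dist_le_mul z w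
      rwa [Real.dist_eq] at this
    have hθz : |θ z| ≤ 1 := abs_le.2 ⟨by linarith [h0 z], h1 z⟩
    have : |f z * θ z - f w * θ w| = |f z| * |θ z| := by
      rw [hfw]; rw [show f z * θ z - 0 * θ w = f z * θ z by ring, abs_mul]
    rw [this]
    have h2 : |f z| = |f z - f w| := by rw [hfw]; ring_nf
    have hdzw : 0 ≤ dist z w := dist_nonneg
    have e4 : |f z| ≤ (Cf:ℝ) * dist z w := by rw [h2]; exact hlip
    have e5 : |f z| * |θ z| ≤ |f z| := mul_le_of_le_one_right (abs_nonneg _) hθz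
    have e6 : 0 ≤ B * (Cθ:ℝ) * dist z w :=
      mul_nonneg (mul_nonneg hBnn (NNReal.coe_nonneg Cθ)) hdzw
    linarith
  by_cases hx : x ∈ tsupport f
  · by_cases hy : y ∈ tsupport f
    · have e1 : |f x - f y| ≤ (Cf:ℝ) * dist x y := by
        have := hCf.dist_le_mul x y; rwa [Real.dist_eq] at this
      have e2 : |θ x - θ y| ≤ (Cθ:ℝ) * dist x y := by
        have := lipschitzOnWith_iff_dist_le_mul.1 hCθ x hx y hy
        rwa [Real.dist_eq] at this
      have hθx : |θ x| ≤ 1 := abs_le.2 ⟨by linarith [h0 x], h1 x⟩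
      have hfy : |f y| ≤ B := hB y
      have e3 : f x * θ x - f y * θ y = θ x * (f x - f y) + f y * (θ x - θ y) := by ring
      calc |f x * θ x - f y * θ y| = |θ x * (f x - f y) + f y * (θ x - θ y)| := by rw [e3]
        _ ≤ |θ x * (f x - f y)| + |f y * (θ x - θ y)| := abs_add_le _ _
        _ = |θ x| * |f x - f y| + |f y| * |θ x - θ y| := by rw [abs_mul, abs_mul]
        _ ≤ 1 * ((Cf:ℝ) * dist x y) + B * ((Cθ:ℝ) * dist x y) := by
            have n1 : (0:ℝ) ≤ |f x - f y| := abs_nonneg _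
            have n2 : (0:ℝ) ≤ |θ x - θ y| := abs_nonneg _
            have n3 : (0:ℝ) ≤ |θ x| := abs_nonneg _
            have n4 : (0:ℝ) ≤ |f y| := abs_nonneg _
            nlinarith
        _ = ((Cf:ℝ) + B * Cθ) * dist x y := by ring
    · exact hflip x y hx hy
  · by_cases hy : y ∈ tsupport f
    · rw [abs_sub_comm, dist_comm]
      exact hflip y x hy hx
    · simp [image_eq_zero_of_notMem_tsupport hx, image_eq_zero_of_notMem_tsupport hy]
      positivity

/-! ### separation lemma -/

lemma sep (T : MetricCurrent X k) (f : X → ℝ) (gb : Fin k → X → ℝ)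
    (hfgb : IsLipForm f gb) (u : X → ℝ) (hu : LocLip u) (hucont : Continuous u)
    (p q : ℝ) (hpq : p < q) (l₁ l₂ : Fin k)
    (hv : ∀ x y, p ≤ u x → p ≤ u y → gb l₁ x = gb l₁ y)
    (hw : ∀ x y, u x ≤ q → u y ≤ q → gb l₂ x = gb l₂ y) :
    T.toFun f gb = 0 := by
  have hqp : 0 < q - p := by linarith
  set θ : X → ℝ := fun x => clampR 0 1 ((q - u x) / (q - p)) with hθdef
  have hβ : LipschitzWith (Real.toNNReal (q - p)⁻¹) (fun t : ℝ => clampR 0 1 ((q - t) / (q - p))) := by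
    apply LipschitzWith.of_dist_le_mul
    intro s t
    rw [Real.dist_eq, Real.dist_eq, Real.coe_toNNReal _ (by positivity)]
    calc |clampR 0 1 ((q - s) / (q - p)) - clampR 0 1 ((q - t) / (q - p))|
        ≤ |(q - s) / (q - p) - (q - t) / (q - p)| := abs_clampR_sub _ _ _ _
      _ = (q - p)⁻¹ * |s - t| := by
          have e : (q - s) / (q - p) - (q - t) / (q - p) = (t - s) / (q - p) := by ring
          rw [e, abs_div, abs_of_pos hqp, abs_sub_comm, div_eq_inv_mul]
  have hθloc : LocLip θ := locLip_comp hu hβ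
  have hθ0 : ∀ x, 0 ≤ θ x := fun x => clampR_lower (by norm_num)
  have hθ1 : ∀ x, θ x ≤ 1 := fun x => clampR_upper
  have hθ_one : ∀ x, u x ≤ p → θ x = 1 := by
    intro x hx
    apply clampR_of_ge (by norm_num)
    rw [le_div_iff₀ hqp]
    linarith
  have hθ_zero : ∀ x, q ≤ u x → θ x = 0 := by
    intro x hx
    apply clampR_of_le (by norm_num)
    apply div_nonpos_of_nonpos_of_nonneg <;> linarith
  set f₁ : X → ℝ := fun x => f x * θ x with hf₁
  set f₂ : X → ℝ := fun x => f x * (1 - θ x) with hf₂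
  have h1m : LocLip (fun x => 1 - θ x) := locLip_sub (locLip_const 1) hθloc
  have hform₁ : IsLipForm f₁ gb := isLipForm_mul hfgb θ hθloc hθ0 hθ1
  have hform₂ : IsLipForm f₂ gb := isLipForm_mul hfgb (fun x => 1 - θ x) h1m
    (fun x => by show (0:ℝ) ≤ 1 - θ x; linarith [hθ1 x])
    (fun x => by show 1 - θ x ≤ 1; linarith [hθ0 x])
  have hsplit : T.toFun f gb = T.toFun f₁ gb + T.toFun f₂ gb := by
    have := T.add_left f₁ f₂ gb hform₁ hform₂
    rw [show (fun x => f₁ x + f₂ x) = f by funext x; simp only [hf₁, hf₂]; ring] at this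
    exact this
  have hz₁ : T.toFun f₁ gb = 0 := by
    refine const_slot T f₁ gb hform₁ l₂ ?_
    have hsub : tsupport f₁ ⊆ {x | u x ≤ q} := by
      apply closure_minimal ?_ (isClosed_le hucont continuous_const)
      intro x hx
      have hθne : θ x ≠ 0 := by
        intro hc
        apply hx
        simp only [hf₁, Function.mem_support, ne_eq, not_not] at *
        rw [hc]; ring
      by_contra hq'
      exact hθne (hθ_zero x (le_of_not_ge hq'))
    intro x hx y hy
    exact hw x y (hsub hx) (hsub hy)
  have hz₂ : T.toFun f₂ gb = 0 := by
    refine const_slot T f₂ gb hform₂ l₁ ?_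
    have hsub : tsupport f₂ ⊆ {x | p ≤ u x} := by
      apply closure_minimal ?_ (isClosed_le continuous_const hucont)
      intro x hx
      have hθne : θ x ≠ 1 := by
        intro hc
        apply hx
        simp only [hf₂, Function.mem_support, ne_eq, not_not] at *
        rw [hc]; ring
      by_contra hq'
      exact hθne (hθ_one x (le_of_lt (lt_of_not_ge hq')))
    intro x hx y hy
    exact hv x y (hsub hx) (hsub hy)
  rw [hsplit, hz₁, hz₂, add_zero]

/-! ### continuity helpers -/

lemma lipschitzWith_clamp_sub (c d : ℝ) : LipschitzWith 1 (fun t : ℝ => clampR 0 c (t - d)) := by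
  apply LipschitzWith.of_dist_le_mul
  intro s t
  rw [Real.dist_eq, Real.dist_eq, NNReal.coe_one, one_mul]
  calc |clampR 0 c (s - d) - clampR 0 c (t - d)| ≤ |(s - d) - (t - d)| := abs_clampR_sub _ _ _ _
    _ = |s - t| := by ring_nf

lemma tendsto_div_np (c : ℝ) : Tendsto (fun n : ℕ => c / ((n:ℝ) + 1)) atTop (𝓝 0) := by
  have e : (fun n : ℕ => c / ((n:ℝ) + 1)) = fun n : ℕ => c * (1 / ((n:ℝ) + 1)) := by
    funext n; ring
  rw [e]
  simpa using tendsto_one_div_add_atTop_nhds_zero_nat.const_mul c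

lemma tends_T (T : MetricCurrent X k) (f : X → ℝ) (g : Fin k → X → ℝ)
    (hfg : IsLipForm f g) {i j : Fin k} (hij : i ≠ j)
    (vs ws : ℕ → X → ℝ) (vl wl : X → ℝ)
    (hv : LocLipConvSeq vs vl) (hw : LocLipConvSeq ws wl) :
    Tendsto (fun n => T.toFun f (Gm g i j (vs n) (ws n))) atTop
      (𝓝 (T.toFun f (Gm g i j vl wl))) := by
  obtain ⟨Cf, hCf⟩ := hfg.1
  apply T.continuity (fun _ => f) (fun n => Gm g i j (vs n) (ws n)) f (Gm g i j vl wl)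
  · exact ⟨fun x => tendsto_const_nhds, ⟨Cf, hCf, fun _ => hCf⟩,
      ⟨tsupport f, hfg.2.1, subset_rfl, fun _ => subset_rfl⟩⟩
  · intro l
    rcases eq_or_ne l i with rfl | hli
    · simpa only [Gm_apply_i] using hv
    · rcases eq_or_ne l j with rfl | hlj
      · simpa only [Gm_apply_j g hij] using hw
      · simp only [Gm_apply_ne g hli hlj]
        exact ⟨fun x => tendsto_const_nhds, fun K hK => by
          obtain ⟨C, hC⟩ := hfg.2.2 l K hK
          exact ⟨C, hC, fun _ => hC⟩⟩

lemma locLipConvSeq_clamp (u : X → ℝ) (hu : LocLip u) (c d : ℕ → ℝ) (hc : ∀ n, 0 ≤ c n)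
    (hlim : Tendsto c atTop (𝓝 0)) :
    LocLipConvSeq (fun n x => clampR 0 (c n) (u x - d n)) (fun _ => 0) := by
  constructor
  · intro x
    apply squeeze_zero (fun n => clampR_lower (hc n)) (fun n => clampR_upper) hlim
  · intro K hK
    obtain ⟨C, hC⟩ := hu K hK
    refine ⟨C, ?_, fun n => ?_⟩
    · exact ((LipschitzWith.const (0:ℝ)).weaken (by positivity)).lipschitzOnWith
    · have h2 := (lipschitzWith_clamp_sub (c n) (d n)).comp_lipschitzOnWith hC
      rw [one_mul] at h2
      exact h2

/-! ### cross terms of clamps over disjoint intervals vanish -/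

lemma cc1 (T : MetricCurrent X k) (f : X → ℝ) (g : Fin k → X → ℝ) (hfg : IsLipForm f g)
    {i j : Fin k} (hij : i ≠ j) (u : X → ℝ) (hu : LocLip u) (hucont : Continuous u)
    (A B A' B' : ℝ) (hAB : A < B) (hA'B' : A' < B') (hBA' : B ≤ A') :
    T.toFun f (Gm g i j (fun x => clampR A B (u x)) (fun x => clampR A' B' (u x))) = 0 := by
  set ε0 : ℝ := min (B - A) (B' - A') with hε0def
  have hε0 : 0 < ε0 := lt_min (by linarith) (by linarith)
  have hclA'B' : LocLip (fun x => clampR A' B' (u x)) := locLip_comp hu (lipschitzWith_clampR A' B')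
  have key : ∀ n : ℕ, T.toFun f (Gm g i j (fun x => clampR A B (u x)) (fun x => clampR A' B' (u x)))
      = T.toFun f (Gm g i j (fun x => clampR 0 (ε0 / ((n:ℝ)+1)) (u x - (B - ε0 / ((n:ℝ)+1))))
          (fun x => clampR 0 (ε0 / ((n:ℝ)+1)) (u x - A'))) := by
    intro n
    set ε : ℝ := ε0 / ((n:ℝ)+1) with hεdef
    have hε : 0 < ε := by rw [hεdef]; positivity
    have hε1 : ε ≤ B - A := by
      rw [hεdef]
      calc ε0 / ((n:ℝ)+1) ≤ ε0 := div_le_self hε0.le (by push_cast; linarith [Nat.cast_nonneg (α := ℝ) n])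
        _ ≤ B - A := min_le_left _ _
    have hε2 : ε ≤ B' - A' := by
      rw [hεdef]
      calc ε0 / ((n:ℝ)+1) ≤ ε0 := div_le_self hε0.le (by push_cast; linarith [Nat.cast_nonneg (α := ℝ) n])
        _ ≤ B' - A' := min_le_right _ _
    have hl1 : LocLip (fun x => clampR A (B - ε) (u x)) := locLip_comp hu (lipschitzWith_clampR _ _)
    have hl2 : LocLip (fun x => clampR 0 ε (u x - (B - ε))) := locLip_comp hu (lipschitzWith_clamp_sub _ _)
    have hl3 : LocLip (fun x => clampR 0 ε (u x - A')) := locLip_comp hu (lipschitzWith_clamp_sub _ _)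
    have hl4 : LocLip (fun x => clampR (A' + ε) B' (u x)) := locLip_comp hu (lipschitzWith_clampR _ _)
    have e1 : (fun x => clampR A B (u x))
        = fun x => clampR A (B - ε) (u x) + clampR 0 ε (u x - (B - ε)) := by
      funext x
      have g1 := clampR_glue (show A ≤ B - ε by linarith) (show B - ε ≤ B by linarith) (u x)
      have g2 : clampR 0 ε (u x - (B - ε)) = clampR (B - ε) B (u x) - (B - ε) := by
        have h := clampR_shift0 (a := B - ε) (b := B) (u x)
        rw [show B - (B - ε) = ε by ring] at h
        exact h
      linarith
    have s1 : T.toFun f (Gm g i j (fun x => clampR A B (u x)) (fun x => clampR A' B' (u x)))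
        = T.toFun f (Gm g i j (fun x => clampR A (B - ε) (u x)) (fun x => clampR A' B' (u x)))
          + T.toFun f (Gm g i j (fun x => clampR 0 ε (u x - (B - ε))) (fun x => clampR A' B' (u x))) := by
      rw [e1]
      exact add_slot T f (Function.update g j (fun x => clampR A' B' (u x))) i
        (fun x => clampR A (B - ε) (u x)) (fun x => clampR 0 ε (u x - (B - ε)))
        (isLipForm_update hfg j hclA'B') hl1 hl2
    have z1 : T.toFun f (Gm g i j (fun x => clampR A (B - ε) (u x)) (fun x => clampR A' B' (u x))) = 0 := by
      apply sep T f _ (isLipForm_Gm hfg i j hl1 hclA'B') u hu hucont (B - ε) A' (by linarith) i j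
      · intro x y hx hy
        simp only [Gm_apply_i]
        rw [clampR_of_ge (by linarith) hx, clampR_of_ge (by linarith) hy]
      · intro x y hx hy
        rw [Gm_apply_j g hij]
        rw [clampR_of_le (le_of_lt hA'B') hx, clampR_of_le (le_of_lt hA'B') hy]
    have e2 : (fun x => clampR A' B' (u x))
        = fun x => (clampR 0 ε (u x - A') + clampR (A' + ε) B' (u x)) + (-ε) := by
      funext x
      have g1 := clampR_glue (show A' ≤ A' + ε by linarith) (show A' + ε ≤ B' by linarith) (u x)
      have g2 : clampR 0 ε (u x - A') = clampR A' (A' + ε) (u x) - A' := by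
        have h := clampR_shift0 (a := A') (b := A' + ε) (u x)
        rw [show A' + ε - A' = ε by ring] at h
        exact h
      linarith
    have s2 : T.toFun f (Gm g i j (fun x => clampR 0 ε (u x - (B - ε))) (fun x => clampR A' B' (u x)))
        = T.toFun f (Gm g i j (fun x => clampR 0 ε (u x - (B - ε))) (fun x => clampR 0 ε (u x - A')))
          + T.toFun f (Gm g i j (fun x => clampR 0 ε (u x - (B - ε))) (fun x => clampR (A' + ε) B' (u x))) := by
      rw [e2, Gm_eq g hij, Gm_eq g hij, Gm_eq g hij]
      rw [transl_slot T f (Function.update g i (fun x => clampR 0 ε (u x - (B - ε)))) j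
        (fun x => clampR 0 ε (u x - A') + clampR (A' + ε) B' (u x)) (-ε)
        (isLipForm_update hfg i hl2) (locLip_add hl3 hl4)]
      exact add_slot T f (Function.update g i (fun x => clampR 0 ε (u x - (B - ε)))) j
        (fun x => clampR 0 ε (u x - A')) (fun x => clampR (A' + ε) B' (u x))
        (isLipForm_update hfg i hl2) hl3 hl4
    have z2 : T.toFun f (Gm g i j (fun x => clampR 0 ε (u x - (B - ε))) (fun x => clampR (A' + ε) B' (u x))) = 0 := by
      apply sep T f _ (isLipForm_Gm hfg i j hl2 hl4) u hu hucont B (A' + ε) (by linarith) i j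
      · intro x y hx hy
        simp only [Gm_apply_i]
        rw [clampR_of_ge hε.le (by linarith), clampR_of_ge hε.le (by linarith)]
      · intro x y hx hy
        rw [Gm_apply_j g hij]
        rw [clampR_of_le (by linarith) hx, clampR_of_le (by linarith) hy]
    rw [s1, z1, zero_add, s2, z2, add_zero]
  have hseq := tends_T T f g hfg hij
    (fun n x => clampR 0 (ε0 / ((n:ℝ)+1)) (u x - (B - ε0 / ((n:ℝ)+1))))
    (fun n x => clampR 0 (ε0 / ((n:ℝ)+1)) (u x - A'))
    (fun _ => 0) (fun _ => 0)
    (locLipConvSeq_clamp u hu (fun n => ε0 / ((n:ℝ)+1)) (fun n => B - ε0 / ((n:ℝ)+1))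
      (fun n => div_nonneg hε0.le (by positivity)) (tendsto_div_np ε0))
    (locLipConvSeq_clamp u hu (fun n => ε0 / ((n:ℝ)+1)) (fun _ => A')
      (fun n => div_nonneg hε0.le (by positivity)) (tendsto_div_np ε0))
  have hzero : T.toFun f (Gm g i j (fun _ => (0:ℝ)) (fun _ => (0:ℝ))) = 0 :=
    const_slot T f _ (isLipForm_Gm hfg i j (locLip_const 0) (locLip_const 0)) i
      (by intro x _ y _; simp [Gm_apply_i])
  rw [hzero] at hseq
  have hconst : Tendsto (fun _ : ℕ =>
      T.toFun f (Gm g i j (fun x => clampR A B (u x)) (fun x => clampR A' B' (u x)))) atTop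
      (𝓝 (T.toFun f (Gm g i j (fun x => clampR A B (u x)) (fun x => clampR A' B' (u x))))) :=
    tendsto_const_nhds
  rw [show (fun _ : ℕ => T.toFun f (Gm g i j (fun x => clampR A B (u x)) (fun x => clampR A' B' (u x))))
      = (fun n : ℕ => T.toFun f (Gm g i j (fun x => clampR 0 (ε0 / ((n:ℝ)+1)) (u x - (B - ε0 / ((n:ℝ)+1))))
          (fun x => clampR 0 (ε0 / ((n:ℝ)+1)) (u x - A')))) from funext key] at hconst
  exact tendsto_nhds_unique hconst hseq

lemma cc2 (T : MetricCurrent X k) (f : X → ℝ) (g : Fin k → X → ℝ) (hfg : IsLipForm f g)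
    {i j : Fin k} (hij : i ≠ j) (u : X → ℝ) (hu : LocLip u) (hucont : Continuous u)
    (A B A' B' : ℝ) (hAB : A < B) (hA'B' : A' < B') (hB'A : B' ≤ A) :
    T.toFun f (Gm g i j (fun x => clampR A B (u x)) (fun x => clampR A' B' (u x))) = 0 := by
  set ε0 : ℝ := min (B - A) (B' - A') with hε0def
  have hε0 : 0 < ε0 := lt_min (by linarith) (by linarith)
  have hclA'B' : LocLip (fun x => clampR A' B' (u x)) := locLip_comp hu (lipschitzWith_clampR A' B')
  have key : ∀ n : ℕ, T.toFun f (Gm g i j (fun x => clampR A B (u x)) (fun x => clampR A' B' (u x)))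
      = T.toFun f (Gm g i j (fun x => clampR 0 (ε0 / ((n:ℝ)+1)) (u x - A))
          (fun x => clampR 0 (ε0 / ((n:ℝ)+1)) (u x - (B' - ε0 / ((n:ℝ)+1))))) := by
    intro n
    set ε : ℝ := ε0 / ((n:ℝ)+1) with hεdef
    have hε : 0 < ε := by rw [hεdef]; positivity
    have hε1 : ε ≤ B - A := by
      rw [hεdef]
      calc ε0 / ((n:ℝ)+1) ≤ ε0 := div_le_self hε0.le (by push_cast; linarith [Nat.cast_nonneg (α := ℝ) n])
        _ ≤ B - A := min_le_left _ _
    have hε2 : ε ≤ B' - A' := by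
      rw [hεdef]
      calc ε0 / ((n:ℝ)+1) ≤ ε0 := div_le_self hε0.le (by push_cast; linarith [Nat.cast_nonneg (α := ℝ) n])
        _ ≤ B' - A' := min_le_right _ _
    have hl1 : LocLip (fun x => clampR 0 ε (u x - A)) := locLip_comp hu (lipschitzWith_clamp_sub _ _)
    have hl2 : LocLip (fun x => clampR (A + ε) B (u x)) := locLip_comp hu (lipschitzWith_clampR _ _)
    have hl3 : LocLip (fun x => clampR A' (B' - ε) (u x)) := locLip_comp hu (lipschitzWith_clampR _ _)
    have hl4 : LocLip (fun x => clampR 0 ε (u x - (B' - ε))) := locLip_comp hu (lipschitzWith_clamp_sub _ _)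
    have e1 : (fun x => clampR A B (u x))
        = fun x => (clampR 0 ε (u x - A) + clampR (A + ε) B (u x)) + (-ε) := by
      funext x
      have g1 := clampR_glue (show A ≤ A + ε by linarith) (show A + ε ≤ B by linarith) (u x)
      have g2 : clampR 0 ε (u x - A) = clampR A (A + ε) (u x) - A := by
        have h := clampR_shift0 (a := A) (b := A + ε) (u x)
        rw [show A + ε - A = ε by ring] at h
        exact h
      linarith
    have s1 : T.toFun f (Gm g i j (fun x => clampR A B (u x)) (fun x => clampR A' B' (u x)))
        = T.toFun f (Gm g i j (fun x => clampR 0 ε (u x - A)) (fun x => clampR A' B' (u x)))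
          + T.toFun f (Gm g i j (fun x => clampR (A + ε) B (u x)) (fun x => clampR A' B' (u x))) := by
      have s1a : T.toFun f (Gm g i j (fun x => (clampR 0 ε (u x - A) + clampR (A + ε) B (u x)) + (-ε))
            (fun x => clampR A' B' (u x)))
          = T.toFun f (Gm g i j (fun x => clampR 0 ε (u x - A) + clampR (A + ε) B (u x))
            (fun x => clampR A' B' (u x))) :=
        transl_slot T f (Function.update g j (fun x => clampR A' B' (u x))) i
          (fun x => clampR 0 ε (u x - A) + clampR (A + ε) B (u x)) (-ε)
          (isLipForm_update hfg j hclA'B') (locLip_add hl1 hl2)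
      rw [e1, s1a]
      exact add_slot T f (Function.update g j (fun x => clampR A' B' (u x))) i
        (fun x => clampR 0 ε (u x - A)) (fun x => clampR (A + ε) B (u x))
        (isLipForm_update hfg j hclA'B') hl1 hl2
    have z1 : T.toFun f (Gm g i j (fun x => clampR (A + ε) B (u x)) (fun x => clampR A' B' (u x))) = 0 := by
      apply sep T f _ (isLipForm_Gm hfg i j hl2 hclA'B') u hu hucont B' (A + ε) (by linarith) j i
      · intro x y hx hy
        rw [Gm_apply_j g hij]
        rw [clampR_of_ge (le_of_lt hA'B') hx, clampR_of_ge (le_of_lt hA'B') hy]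
      · intro x y hx hy
        simp only [Gm_apply_i]
        rw [clampR_of_le (by linarith) hx, clampR_of_le (by linarith) hy]
    have e2 : (fun x => clampR A' B' (u x))
        = fun x => clampR A' (B' - ε) (u x) + clampR 0 ε (u x - (B' - ε)) := by
      funext x
      have g1 := clampR_glue (show A' ≤ B' - ε by linarith) (show B' - ε ≤ B' by linarith) (u x)
      have g2 : clampR 0 ε (u x - (B' - ε)) = clampR (B' - ε) B' (u x) - (B' - ε) := by
        have h := clampR_shift0 (a := B' - ε) (b := B') (u x)
        rw [show B' - (B' - ε) = ε by ring] at h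
        exact h
      linarith
    have s2 : T.toFun f (Gm g i j (fun x => clampR 0 ε (u x - A)) (fun x => clampR A' B' (u x)))
        = T.toFun f (Gm g i j (fun x => clampR 0 ε (u x - A)) (fun x => clampR A' (B' - ε) (u x)))
          + T.toFun f (Gm g i j (fun x => clampR 0 ε (u x - A)) (fun x => clampR 0 ε (u x - (B' - ε)))) := by
      rw [e2, Gm_eq g hij, Gm_eq g hij, Gm_eq g hij]
      exact add_slot T f (Function.update g i (fun x => clampR 0 ε (u x - A))) j
        (fun x => clampR A' (B' - ε) (u x)) (fun x => clampR 0 ε (u x - (B' - ε)))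
        (isLipForm_update hfg i hl1) hl3 hl4
    have z2 : T.toFun f (Gm g i j (fun x => clampR 0 ε (u x - A)) (fun x => clampR A' (B' - ε) (u x))) = 0 := by
      apply sep T f _ (isLipForm_Gm hfg i j hl1 hl3) u hu hucont (B' - ε) A (by linarith) j i
      · intro x y hx hy
        rw [Gm_apply_j g hij]
        rw [clampR_of_ge (by linarith) hx, clampR_of_ge (by linarith) hy]
      · intro x y hx hy
        simp only [Gm_apply_i]
        rw [clampR_of_le hε.le (by linarith), clampR_of_le hε.le (by linarith)]
    rw [s1, z1, add_zero, s2, z2, zero_add]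
  have hseq := tends_T T f g hfg hij
    (fun n x => clampR 0 (ε0 / ((n:ℝ)+1)) (u x - A))
    (fun n x => clampR 0 (ε0 / ((n:ℝ)+1)) (u x - (B' - ε0 / ((n:ℝ)+1))))
    (fun _ => 0) (fun _ => 0)
    (locLipConvSeq_clamp u hu (fun n => ε0 / ((n:ℝ)+1)) (fun _ => A)
      (fun n => div_nonneg hε0.le (by positivity)) (tendsto_div_np ε0))
    (locLipConvSeq_clamp u hu (fun n => ε0 / ((n:ℝ)+1)) (fun n => B' - ε0 / ((n:ℝ)+1))
      (fun n => div_nonneg hε0.le (by positivity)) (tendsto_div_np ε0))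
  have hzero : T.toFun f (Gm g i j (fun _ => (0:ℝ)) (fun _ => (0:ℝ))) = 0 :=
    const_slot T f _ (isLipForm_Gm hfg i j (locLip_const 0) (locLip_const 0)) i
      (by intro x _ y _; simp [Gm_apply_i])
  rw [hzero] at hseq
  have hconst : Tendsto (fun _ : ℕ =>
      T.toFun f (Gm g i j (fun x => clampR A B (u x)) (fun x => clampR A' B' (u x)))) atTop
      (𝓝 (T.toFun f (Gm g i j (fun x => clampR A B (u x)) (fun x => clampR A' B' (u x))))) :=
    tendsto_const_nhds
  rw [show (fun _ : ℕ => T.toFun f (Gm g i j (fun x => clampR A B (u x)) (fun x => clampR A' B' (u x))))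
      = (fun n : ℕ => T.toFun f (Gm g i j (fun x => clampR 0 (ε0 / ((n:ℝ)+1)) (u x - A))
          (fun x => clampR 0 (ε0 / ((n:ℝ)+1)) (u x - (B' - ε0 / ((n:ℝ)+1)))))) from funext key] at hconst
  exact tendsto_nhds_unique hconst hseq

/-! ### cross terms at scale n vanish -/

lemma cross_gen (T : MetricCurrent X k) (f : X → ℝ) (g : Fin k → X → ℝ)
    (hfg : IsLipForm f g) {i j : Fin k} (hij : i ≠ j) (u : X → ℝ) (hu : LocLip u)
    (hucont : Continuous u) (M n : ℕ) (a b : ℕ → ℕ)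
    (hab : ∀ m m', (a m + 1 ≤ b m') ∨ (b m' + 1 ≤ a m))
    (hVa : ∀ m, LocLip (fun x => clampR 0 (1/((n:ℝ)+1)) (u x - gE M n (a m))))
    (hVb : ∀ m, LocLip (fun x => clampR 0 (1/((n:ℝ)+1)) (u x - gE M n (b m)))) :
    T.toFun f (Gm g i j (fun x => ∑ m ∈ Finset.range (M * (n+1)), clampR 0 (1/((n:ℝ)+1)) (u x - gE M n (a m)))
      (fun x => ∑ m' ∈ Finset.range (M * (n+1)), clampR 0 (1/((n:ℝ)+1)) (u x - gE M n (b m')))) = 0 := by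
  have hWb : LocLip (fun x => ∑ m' ∈ Finset.range (M * (n+1)), clampR 0 (1/((n:ℝ)+1)) (u x - gE M n (b m'))) :=
    locLip_sum _ _ hVb
  have hsum_i := sum_slot T f
    (Function.update g j (fun x => ∑ m' ∈ Finset.range (M * (n+1)), clampR 0 (1/((n:ℝ)+1)) (u x - gE M n (b m'))))
    i (Finset.range (M * (n+1))) (fun m x => clampR 0 (1/((n:ℝ)+1)) (u x - gE M n (a m)))
    (isLipForm_update hfg j hWb) hVa
  have hEQ1 : (T.toFun f (Gm g i j (fun x => ∑ m ∈ Finset.range (M * (n+1)), clampR 0 (1/((n:ℝ)+1)) (u x - gE M n (a m)))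
      (fun x => ∑ m' ∈ Finset.range (M * (n+1)), clampR 0 (1/((n:ℝ)+1)) (u x - gE M n (b m')))))
      = ∑ m ∈ Finset.range (M * (n+1)), T.toFun f
        (Function.update (Function.update g j (fun x => ∑ m' ∈ Finset.range (M * (n+1)), clampR 0 (1/((n:ℝ)+1)) (u x - gE M n (b m')))) i
          (fun x => clampR 0 (1/((n:ℝ)+1)) (u x - gE M n (a m)))) := hsum_i
  rw [hEQ1]
  apply Finset.sum_eq_zero
  intro m hm
  have hsum_j := sum_slot T f
    (Function.update g i (fun x => clampR 0 (1/((n:ℝ)+1)) (u x - gE M n (a m))))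
    j (Finset.range (M * (n+1))) (fun m' x => clampR 0 (1/((n:ℝ)+1)) (u x - gE M n (b m')))
    (isLipForm_update hfg i (hVa m)) hVb
  have hcomm : Function.update (Function.update g j (fun x => ∑ m' ∈ Finset.range (M * (n+1)), clampR 0 (1/((n:ℝ)+1)) (u x - gE M n (b m')))) i
      (fun x => clampR 0 (1/((n:ℝ)+1)) (u x - gE M n (a m)))
      = Function.update (Function.update g i (fun x => clampR 0 (1/((n:ℝ)+1)) (u x - gE M n (a m)))) j
        (fun x => ∑ m' ∈ Finset.range (M * (n+1)), clampR 0 (1/((n:ℝ)+1)) (u x - gE M n (b m'))) :=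
    Function.update_comm hij.symm _ _ g
  have hEQ2 : T.toFun f (Function.update (Function.update g i (fun x => clampR 0 (1/((n:ℝ)+1)) (u x - gE M n (a m)))) j
      (fun x => ∑ m' ∈ Finset.range (M * (n+1)), clampR 0 (1/((n:ℝ)+1)) (u x - gE M n (b m'))))
      = ∑ m' ∈ Finset.range (M * (n+1)), T.toFun f
        (Function.update (Function.update g i (fun x => clampR 0 (1/((n:ℝ)+1)) (u x - gE M n (a m)))) j
          (fun x => clampR 0 (1/((n:ℝ)+1)) (u x - gE M n (b m')))) := hsum_j
  rw [hcomm, hEQ2]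
  apply Finset.sum_eq_zero
  intro m' hm'
  -- now a single pair of clamps on disjoint tiles
  have hstep : ∀ r : ℕ, gE M n r < gE M n (r + 1) := by
    intro r; rw [gE_succ]; linarith [npos n]
  have ea : (fun x => clampR 0 (1/((n:ℝ)+1)) (u x - gE M n (a m)))
      = fun x => clampR (gE M n (a m)) (gE M n (a m + 1)) (u x) + (-(gE M n (a m))) := by
    funext x
    have h := clampR_shift0 (a := gE M n (a m)) (b := gE M n (a m + 1)) (u x)
    rw [show gE M n (a m + 1) - gE M n (a m) = 1/((n:ℝ)+1) by rw [gE_succ]; ring] at h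
    rw [h]; ring
  have eb : (fun x => clampR 0 (1/((n:ℝ)+1)) (u x - gE M n (b m')))
      = fun x => clampR (gE M n (b m')) (gE M n (b m' + 1)) (u x) + (-(gE M n (b m'))) := by
    funext x
    have h := clampR_shift0 (a := gE M n (b m')) (b := gE M n (b m' + 1)) (u x)
    rw [show gE M n (b m' + 1) - gE M n (b m') = 1/((n:ℝ)+1) by rw [gE_succ]; ring] at h
    rw [h]; ring
  have hla : LocLip (fun x => clampR (gE M n (a m)) (gE M n (a m + 1)) (u x)) :=
    locLip_comp hu (lipschitzWith_clampR _ _)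
  have hlb : LocLip (fun x => clampR (gE M n (b m')) (gE M n (b m' + 1)) (u x)) :=
    locLip_comp hu (lipschitzWith_clampR _ _)
  have t1 : T.toFun f (Gm g i j (fun x => clampR (gE M n (a m)) (gE M n (a m + 1)) (u x) + (-(gE M n (a m))))
        (fun x => clampR 0 (1/((n:ℝ)+1)) (u x - gE M n (b m'))))
      = T.toFun f (Gm g i j (fun x => clampR (gE M n (a m)) (gE M n (a m + 1)) (u x))
        (fun x => clampR 0 (1/((n:ℝ)+1)) (u x - gE M n (b m')))) :=
    transl_slot T f (Function.update g j (fun x => clampR 0 (1/((n:ℝ)+1)) (u x - gE M n (b m')))) i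
      (fun x => clampR (gE M n (a m)) (gE M n (a m + 1)) (u x)) (-(gE M n (a m)))
      (isLipForm_update hfg j (hVb m')) hla
  have t2 : T.toFun f (Gm g i j (fun x => clampR (gE M n (a m)) (gE M n (a m + 1)) (u x))
        (fun x => clampR (gE M n (b m')) (gE M n (b m' + 1)) (u x) + (-(gE M n (b m')))))
      = T.toFun f (Gm g i j (fun x => clampR (gE M n (a m)) (gE M n (a m + 1)) (u x))
        (fun x => clampR (gE M n (b m')) (gE M n (b m' + 1)) (u x))) := by
    rw [Gm_eq g hij, Gm_eq g hij]
    exact transl_slot T f (Function.update g i (fun x => clampR (gE M n (a m)) (gE M n (a m + 1)) (u x))) j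
      (fun x => clampR (gE M n (b m')) (gE M n (b m' + 1)) (u x)) (-(gE M n (b m')))
      (isLipForm_update hfg i hla) hlb
  have hGm : T.toFun f (Function.update (Function.update g i (fun x => clampR 0 (1/((n:ℝ)+1)) (u x - gE M n (a m)))) j
        (fun x => clampR 0 (1/((n:ℝ)+1)) (u x - gE M n (b m'))))
      = T.toFun f (Gm g i j (fun x => clampR 0 (1/((n:ℝ)+1)) (u x - gE M n (a m)))
        (fun x => clampR 0 (1/((n:ℝ)+1)) (u x - gE M n (b m')))) := by
    rw [Gm_eq g hij]
  rw [hGm, ea, t1, eb, t2]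
  rcases hab m m' with hor | hor
  · exact cc1 T f g hfg hij u hu hucont _ _ _ _ (hstep _) (hstep _)
      (by rw [show a m + 1 = a m + 1 from rfl]; exact gE_mono M n hor)
  · exact cc2 T f g hfg hij u hu hucont _ _ _ _ (hstep _) (hstep _)
      (gE_mono M n hor)

/-! ### the diagonal vanishing lemma -/

lemma diag [LocallyCompactSpace X] (T : MetricCurrent X k) (f : X → ℝ) (g : Fin k → X → ℝ)
    (hfg : IsLipForm f g) {i j : Fin k} (hij : i ≠ j) (v : X → ℝ) (hv : LocLip v) :
    T.toFun f (Gm g i j v v) = 0 := by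
  classical
  have hK : IsCompact (tsupport f) := hfg.2.1
  have hvcont : Continuous v := locLip_continuous hv
  obtain ⟨B0, hB0⟩ := (hK.image_of_continuousOn hvcont.continuousOn).isBounded.exists_norm_le
  obtain ⟨M, hM0⟩ := exists_nat_ge B0
  have hM : ∀ x ∈ tsupport f, |v x| ≤ (M:ℝ) := fun x hx =>
    le_trans (by simpa [Real.norm_eq_abs] using hB0 (v x) ⟨x, hx, rfl⟩) hM0
  set u : X → ℝ := fun x => clampR (-(M:ℝ)) M (v x) with hudef
  have hMM : -(M:ℝ) ≤ (M:ℝ) := by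
    have : (0:ℝ) ≤ M := Nat.cast_nonneg M
    linarith
  have hu : LocLip u := locLip_comp hv (lipschitzWith_clampR _ _)
  have hucont : Continuous u := ((lipschitzWith_clampR (-(M:ℝ)) M).continuous).comp hvcont
  have hrange : ∀ x, -(M:ℝ) ≤ u x ∧ u x ≤ M := fun x => ⟨clampR_lower hMM, clampR_upper⟩
  have hueq : ∀ x ∈ tsupport f, u x = v x := fun x hx => by
    show clampR (-(M:ℝ)) M (v x) = v x
    exact clampR_of_mem (abs_le.1 (hM x hx)).1 (abs_le.1 (hM x hx)).2
  have hred : T.toFun f (Gm g i j v v) = T.toFun f (Gm g i j u u) := by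
    have r1 : T.toFun f (Gm g i j v v) = T.toFun f (Gm g i j u v) :=
      replace_slot T f (Function.update g j v) i v u (isLipForm_update hfg j hv) hv hu
        (fun x hx => (hueq x hx).symm)
    have r2 : T.toFun f (Gm g i j u v) = T.toFun f (Gm g i j u u) := by
      rw [Gm_eq g hij, Gm_eq g hij]
      exact replace_slot T f (Function.update g i u) j v u (isLipForm_update hfg i hu) hv hu
        (fun x hx => (hueq x hx).symm)
    rw [r1, r2]
  rw [hred]
  have hgσ : ∀ n : ℕ, LocLip (fun x => gridσ M n (u x)) := fun n =>
    locLip_comp hu (lipschitzWith_gridσ M n)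
  have hgτ : ∀ n : ℕ, LocLip (fun x => gridτ M n (u x)) := fun n =>
    locLip_comp hu (lipschitzWith_gridτ M n)
  -- cross terms vanish
  have hVgen : ∀ n : ℕ, ∀ r : ℕ → ℕ, ∀ m : ℕ,
      LocLip (fun x => clampR 0 (1/((n:ℝ)+1)) (u x - gE M n (r m))) := fun n r m =>
    locLip_comp hu (lipschitzWith_clamp_sub _ _)
  have cross1 : ∀ n : ℕ,
      T.toFun f (Gm g i j (fun x => gridσ M n (u x)) (fun x => gridτ M n (u x))) = 0 := by
    intro n
    have := cross_gen T f g hfg hij u hu hucont M n (fun m => 2*m) (fun m' => 2*m'+1)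
      (fun m m' => by omega) (hVgen n _) (hVgen n _)
    exact this
  have cross2 : ∀ n : ℕ,
      T.toFun f (Gm g i j (fun x => gridτ M n (u x)) (fun x => gridσ M n (u x))) = 0 := by
    intro n
    have := cross_gen T f g hfg hij u hu hucont M n (fun m => 2*m+1) (fun m' => 2*m')
      (fun m m' => by omega) (hVgen n _) (hVgen n _)
    exact this
  -- the decomposition identity at each scale
  have key : ∀ n : ℕ, T.toFun f (Gm g i j u u)
      = T.toFun f (Gm g i j (fun x => gridσ M n (u x)) (fun x => gridσ M n (u x)))
        + T.toFun f (Gm g i j (fun x => gridτ M n (u x)) (fun x => gridτ M n (u x))) := by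
    intro n
    have ueq : u = fun x => (gridσ M n (u x) + gridτ M n (u x)) + (-(M:ℝ)) := by
      funext x
      have h := grid_sum_eq M n (u x)
      have h2 : clampR (-(M:ℝ)) M (u x) = u x := clampR_of_mem (hrange x).1 (hrange x).2
      rw [h2] at h
      linarith
    have s1 : T.toFun f (Gm g i j u u)
        = T.toFun f (Gm g i j (fun x => gridσ M n (u x)) u)
          + T.toFun f (Gm g i j (fun x => gridτ M n (u x)) u) := by
      have e1 : Gm g i j u u = Gm g i j (fun x => (gridσ M n (u x) + gridτ M n (u x)) + (-(M:ℝ))) u := by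
        rw [← ueq]
      have t1 : T.toFun f (Gm g i j (fun x => (gridσ M n (u x) + gridτ M n (u x)) + (-(M:ℝ))) u)
          = T.toFun f (Gm g i j (fun x => gridσ M n (u x) + gridτ M n (u x)) u) :=
        transl_slot T f (Function.update g j u) i (fun x => gridσ M n (u x) + gridτ M n (u x))
          (-(M:ℝ)) (isLipForm_update hfg j hu) (locLip_add (hgσ n) (hgτ n))
      rw [e1, t1]
      exact add_slot T f (Function.update g j u) i (fun x => gridσ M n (u x))
        (fun x => gridτ M n (u x)) (isLipForm_update hfg j hu) (hgσ n) (hgτ n)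
    have s2 : ∀ w : X → ℝ, LocLip w
        → T.toFun f (Gm g i j w u)
          = T.toFun f (Gm g i j w (fun x => gridσ M n (u x)))
            + T.toFun f (Gm g i j w (fun x => gridτ M n (u x))) := by
      intro w hw
      have e2 : Gm g i j w u = Gm g i j w (fun x => (gridσ M n (u x) + gridτ M n (u x)) + (-(M:ℝ))) := by
        rw [← ueq]
      have t2 : T.toFun f (Gm g i j w (fun x => (gridσ M n (u x) + gridτ M n (u x)) + (-(M:ℝ))))
          = T.toFun f (Gm g i j w (fun x => gridσ M n (u x) + gridτ M n (u x))) := by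
        rw [Gm_eq g hij, Gm_eq g hij]
        exact transl_slot T f (Function.update g i w) j
          (fun x => gridσ M n (u x) + gridτ M n (u x)) (-(M:ℝ))
          (isLipForm_update hfg i hw) (locLip_add (hgσ n) (hgτ n))
      rw [e2, t2, Gm_eq g hij, Gm_eq g hij, Gm_eq g hij]
      exact add_slot T f (Function.update g i w) j (fun x => gridσ M n (u x))
        (fun x => gridτ M n (u x)) (isLipForm_update hfg i hw) (hgσ n) (hgτ n)
    rw [s1, s2 _ (hgσ n), s2 _ (hgτ n), cross1 n, cross2 n]
    ring
  -- limits
  have hhalf : LipschitzWith 1 (fun t : ℝ => (t + M) / 2) := by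
    apply LipschitzWith.of_dist_le_mul
    intro s t
    rw [Real.dist_eq, Real.dist_eq, NNReal.coe_one, one_mul]
    rw [show (s + (M:ℝ))/2 - (t + M)/2 = (s - t)/2 by ring, abs_div,
      abs_of_pos (by norm_num : (0:ℝ) < 2)]
    linarith [abs_nonneg (s - t)]
  have hσconv : LocLipConvSeq (fun n x => gridσ M n (u x)) (fun x => (u x + M) / 2) := by
    constructor
    · intro x
      rw [tendsto_iff_dist_tendsto_zero]
      apply squeeze_zero (fun n => dist_nonneg) (fun n => ?_) (tendsto_div_np 2)
      rw [Real.dist_eq]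
      exact gridσ_est M n (u x) (hrange x).1 (hrange x).2
    · intro K hKc
      obtain ⟨C, hC⟩ := hu K hKc
      refine ⟨C, ?_, fun n => ?_⟩
      · have h2 := hhalf.comp_lipschitzOnWith hC
        rw [one_mul] at h2
        exact h2
      · have h2 := (lipschitzWith_gridσ M n).comp_lipschitzOnWith hC
        rw [one_mul] at h2
        exact h2
  have hτconv : LocLipConvSeq (fun n x => gridτ M n (u x)) (fun x => (u x + M) / 2) := by
    constructor
    · intro x
      rw [tendsto_iff_dist_tendsto_zero]
      apply squeeze_zero (fun n => dist_nonneg) (fun n => ?_) (tendsto_div_np 2)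
      rw [Real.dist_eq]
      exact gridτ_est M n (u x) (hrange x).1 (hrange x).2
    · intro K hKc
      obtain ⟨C, hC⟩ := hu K hKc
      refine ⟨C, ?_, fun n => ?_⟩
      · have h2 := hhalf.comp_lipschitzOnWith hC
        rw [one_mul] at h2
        exact h2
      · have h2 := (lipschitzWith_gridτ M n).comp_lipschitzOnWith hC
        rw [one_mul] at h2
        exact h2
  have hlimσ := tends_T T f g hfg hij (fun n x => gridσ M n (u x)) (fun n x => gridσ M n (u x))
    (fun x => (u x + M) / 2) (fun x => (u x + M) / 2) hσconv hσconv
  have hlimτ := tends_T T f g hfg hij (fun n x => gridτ M n (u x)) (fun n x => gridτ M n (u x))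
    (fun x => (u x + M) / 2) (fun x => (u x + M) / 2) hτconv hτconv
  have hsum := hlimσ.add hlimτ
  have hconstD : Tendsto (fun _ : ℕ => T.toFun f (Gm g i j u u)) atTop
      (𝓝 (T.toFun f (Gm g i j u u))) := tendsto_const_nhds
  rw [show (fun _ : ℕ => T.toFun f (Gm g i j u u))
      = (fun n : ℕ => T.toFun f (Gm g i j (fun x => gridσ M n (u x)) (fun x => gridσ M n (u x)))
          + T.toFun f (Gm g i j (fun x => gridτ M n (u x)) (fun x => gridτ M n (u x))))
      from funext key] at hconstD
  have hDD := tendsto_nhds_unique hconstD hsum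
  -- compute the limit value
  have hwloc : LocLip (fun x => (u x + M) / 2) := locLip_comp hu hhalf
  have hhalfu : LocLip (fun x => (1/2 : ℝ) * u x) := by
    have : LipschitzWith 1 (fun t : ℝ => (1/2 : ℝ) * t) := by
      apply LipschitzWith.of_dist_le_mul
      intro s t
      rw [Real.dist_eq, Real.dist_eq, NNReal.coe_one, one_mul,
        show (1/2:ℝ) * s - (1/2) * t = (s - t)/2 by ring, abs_div,
        abs_of_pos (by norm_num : (0:ℝ) < 2)]
      linarith [abs_nonneg (s - t)]
    exact locLip_comp hu this
  have hwval : T.toFun f (Gm g i j (fun x => (u x + M) / 2) (fun x => (u x + M) / 2))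
      = (1/2 : ℝ) * ((1/2 : ℝ) * T.toFun f (Gm g i j u u)) := by
    have hw1 : (fun x => (u x + (M:ℝ)) / 2) = fun x => (1/2 : ℝ) * u x + (M:ℝ)/2 := by
      funext x; ring
    rw [hw1]
    have t1 : T.toFun f (Gm g i j (fun x => (1/2 : ℝ) * u x + (M:ℝ)/2) (fun x => (1/2 : ℝ) * u x + (M:ℝ)/2))
        = T.toFun f (Gm g i j (fun x => (1/2 : ℝ) * u x) (fun x => (1/2 : ℝ) * u x + (M:ℝ)/2)) :=
      transl_slot T f (Function.update g j (fun x => (1/2 : ℝ) * u x + (M:ℝ)/2)) i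
        (fun x => (1/2 : ℝ) * u x) ((M:ℝ)/2)
        (isLipForm_update hfg j (by rw [← hw1]; exact hwloc)) hhalfu
    have t2 : T.toFun f (Gm g i j (fun x => (1/2 : ℝ) * u x) (fun x => (1/2 : ℝ) * u x + (M:ℝ)/2))
        = (1/2 : ℝ) * T.toFun f (Gm g i j u (fun x => (1/2 : ℝ) * u x + (M:ℝ)/2)) :=
      smul_slot T f (Function.update g j (fun x => (1/2 : ℝ) * u x + (M:ℝ)/2)) i (1/2 : ℝ) u
        (isLipForm_update hfg j (by rw [← hw1]; exact hwloc)) hu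
    have t3 : T.toFun f (Gm g i j u (fun x => (1/2 : ℝ) * u x + (M:ℝ)/2))
        = T.toFun f (Gm g i j u (fun x => (1/2 : ℝ) * u x)) := by
      rw [Gm_eq g hij, Gm_eq g hij]
      exact transl_slot T f (Function.update g i u) j (fun x => (1/2 : ℝ) * u x) ((M:ℝ)/2)
        (isLipForm_update hfg i hu) hhalfu
    have t4 : T.toFun f (Gm g i j u (fun x => (1/2 : ℝ) * u x))
        = (1/2 : ℝ) * T.toFun f (Gm g i j u u) := by
      rw [Gm_eq g hij, Gm_eq g hij]
      exact smul_slot T f (Function.update g i u) j (1/2 : ℝ) u (isLipForm_update hfg i hu) hu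
    rw [t1, t2, t3, t4]
  rw [hwval] at hDD
  linarith

end

end Stmt17Aux

/-- metric currents satisfy the alternating property:
swapping two of the Lipschitz arguments `gⁱ, gʲ` changes the sign. -/
theorem stmt17 {X : Type*} [MetricSpace X] [TopologicalSpace.SeparableSpace X]
    [LocallyCompactSpace X]
    {k : ℕ} (T : MetricCurrent X k)
    (f : X → ℝ) (g : Fin k → X → ℝ) (hfg : IsLipForm f g)
    (i j : Fin k) (hij : i ≠ j) :
    T.toFun f (fun l => g (Equiv.swap i j l)) = - T.toFun f g := by
  classical
  open Stmt17Aux in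
  have hgi : LocLip (g i) := hfg.2.2 i
  have hgj : LocLip (g j) := hfg.2.2 j
  have hpl : LocLip (fun x => g i x + g j x) := Stmt17Aux.locLip_add hgi hgj
  have hd := Stmt17Aux.diag T f g hfg hij (fun x => g i x + g j x) hpl
  have s1 : T.toFun f (Stmt17Aux.Gm g i j (fun x => g i x + g j x) (fun x => g i x + g j x))
      = T.toFun f (Stmt17Aux.Gm g i j (g i) (fun x => g i x + g j x))
        + T.toFun f (Stmt17Aux.Gm g i j (g j) (fun x => g i x + g j x)) :=
    Stmt17Aux.add_slot T f (Function.update g j (fun x => g i x + g j x)) i (g i) (g j)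
      (Stmt17Aux.isLipForm_update hfg j hpl) hgi hgj
  have s2 : ∀ w : X → ℝ, LocLip w →
      T.toFun f (Stmt17Aux.Gm g i j w (fun x => g i x + g j x))
        = T.toFun f (Stmt17Aux.Gm g i j w (g i)) + T.toFun f (Stmt17Aux.Gm g i j w (g j)) := by
    intro w hw
    rw [Stmt17Aux.Gm_eq g hij, Stmt17Aux.Gm_eq g hij, Stmt17Aux.Gm_eq g hij]
    exact Stmt17Aux.add_slot T f (Function.update g i w) j (g i) (g j)
      (Stmt17Aux.isLipForm_update hfg i hw) hgi hgj
  have d1 : T.toFun f (Stmt17Aux.Gm g i j (g i) (g i)) = 0 :=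
    Stmt17Aux.diag T f g hfg hij (g i) hgi
  have d2 : T.toFun f (Stmt17Aux.Gm g i j (g j) (g j)) = 0 :=
    Stmt17Aux.diag T f g hfg hij (g j) hgj
  have eg : Stmt17Aux.Gm g i j (g i) (g j) = g := by
    unfold Stmt17Aux.Gm
    rw [Function.update_eq_self j g, Function.update_eq_self i g]
  have es : Stmt17Aux.Gm g i j (g j) (g i) = (fun l => g (Equiv.swap i j l)) := by
    funext l
    rcases eq_or_ne l i with rfl | hl1
    · rw [Stmt17Aux.Gm_apply_i, Equiv.swap_apply_left]
    · rcases eq_or_ne l j with rfl | hl2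
      · rw [Stmt17Aux.Gm_apply_j g hij, Equiv.swap_apply_right]
      · rw [Stmt17Aux.Gm_apply_ne g hl1 hl2, Equiv.swap_apply_of_ne_of_ne hl1 hl2]
  rw [s1, s2 _ hgi, s2 _ hgj, d1, d2, eg, es] at hd
  linarith
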